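/- arXiv:0711.4166 — 3 statements merged into one kernel-verified Lean document; each statement's English description precedes it below -/
import Mathlib

section
/- Let G be a group, i an involution in G, and A an abelian subgroup containing ii^g for some g ∈ G, such that A is normalized and inverted by i (i.e., i·a·i = a⁻¹ for all a ∈ A), and A contains no involutions. If x, y ∈ g·A both centralize i, then x = y. -/
/-- Let `i` be an involution, `A` an abelian subgroup containing
`i * i^g`, normalized and inverted by `i`, and without involutions. If
`x, y ∈ g·A` both centralize `i`, then `x = y`. -/
theorem stmt5 {G : Type*} [Group G] (i g : G) (A : Subgroup G)
    (hi : i ^ 2 = 1) (hi1 : i ≠ 1)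
    (hcomm : ∀ a ∈ A, ∀ b ∈ A, a * b = b * a)
    (hmem : i * (g⁻¹ * i * g) ∈ A)
    (hnorm : ∀ a ∈ A, i * a * i⁻¹ ∈ A)
    (hinv : ∀ a ∈ A, i * a * i = a⁻¹)
    (hnoinv : ∀ a ∈ A, a ^ 2 = 1 → a = 1)
    (x y : G) (hx : ∃ a ∈ A, x = g * a) (hy : ∃ a ∈ A, y = g * a)
    (hxc : x * i = i * x) (hyc : y * i = i * y) :
    x = y := by
  obtain ⟨a, ha, rfl⟩ := hx
  obtain ⟨b, hb, rfl⟩ := hy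
  have hc : a⁻¹ * b ∈ A := mul_mem (inv_mem ha) hb
  have h1 : i * (a⁻¹ * b) * i = (a⁻¹ * b)⁻¹ := hinv _ hc
  have hx' : i * (g * a)⁻¹ = (g * a)⁻¹ * i := by
    calc i * (g * a)⁻¹ = (g * a)⁻¹ * (g * a * i) * (g * a)⁻¹ := by group
    _ = (g * a)⁻¹ * (i * (g * a)) * (g * a)⁻¹ := by rw [hxc]
    _ = (g * a)⁻¹ * i := by group
  have h2 : i * (a⁻¹ * b) * i = a⁻¹ * b := by
    calc i * (a⁻¹ * b) * i = (i * (g * a)⁻¹) * (g * b * i) := by group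
    _ = ((g * a)⁻¹ * i) * (i * (g * b)) := by rw [hx', hyc]
    _ = (g * a)⁻¹ * (i * i) * (g * b) := by group
    _ = a⁻¹ * b := by rw [← sq, hi]; group
  have heq : (a⁻¹ * b)⁻¹ = a⁻¹ * b := h1.symm.trans h2
  have h3 : (a⁻¹ * b) ^ 2 = 1 := by
    rw [sq]
    nth_rewrite 1 [← heq]
    exact inv_mul_cancel _
  have h4 := hnoinv _ hc h3
  have : a = b := by
    rwa [inv_mul_eq_one] at h4
  rw [this]
end

section
/- Let G be a group with no elements of order 2 and let i be an automorphism of G with i² = id. Suppose every element of G inverted by i has a square root in G that is also inverted by i. Then G = {h · c : h ∈ G is inverted by i, and c ∈ G is fixed by i}; more precisely, every g ∈ G can be written as g = h·c with i(h) = h⁻¹ and i(c) = c. -/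
/-- Let `G` have no elements of order 2 and `f` an involutory
automorphism such that every element inverted by `f` has a square root inverted
by `f`. Then every `g ∈ G` factors as `g = h * c` with `f h = h⁻¹`, `f c = c`. -/
theorem stmt7 {G : Type*} [Group G] (f : G ≃* G)
    (h2 : ∀ g : G, g ^ 2 = 1 → g = 1)
    (hf2 : ∀ g : G, f (f g) = g)
    (hsqrt : ∀ x : G, f x = x⁻¹ → ∃ h : G, h ^ 2 = x ∧ f h = h⁻¹) :
    ∀ g : G, ∃ h c : G, f h = h⁻¹ ∧ f c = c ∧ g = h * c := by
  intro g
  obtain ⟨h, hh2, hhf⟩ := hsqrt (g * (f g)⁻¹) (by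
    simp [map_mul, hf2, mul_inv_rev])
  refine ⟨h, h⁻¹ * g, hhf, ?_, by group⟩
  have hfg : f g = (h ^ 2)⁻¹ * g := by
    rw [hh2]; group
  rw [map_mul, map_inv, hhf, inv_inv, hfg]
  group
end

section
/- Let H be a finite group of odd order and let V = ⟨i, j⟩ be a Klein four-group acting on H by automorphisms. Then H is generated by the fixed-point subgroups of the nontrivial elements of V: H = ⟨C_H(i), C_H(j), C_H(ij)⟩. -/
open Pointwise
open scoped commutatorElement

universe u


open MulAction in
lemma exists_fixed_pair {X : Type*} [Finite X] (hodd : Odd (Nat.card X)) (f g : X → X)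
    (hf : ∀ x, f (f x) = x) (hg : ∀ x, g (g x) = x) (hfg : ∀ x, f (g x) = g (f x)) :
    ∃ x, f x = x ∧ g x = x := by
  classical
  set M := Multiplicative (ZMod 2) × Multiplicative (ZMod 2) with hM
  let F : Multiplicative (ZMod 2) → (X → X) → X → X := fun a k => if a = 1 then id else k
  have hFmul : ∀ (k : X → X), (∀ x, k (k x) = x) → ∀ (a b : Multiplicative (ZMod 2)) (x : X),
      F (a * b) k x = F a k (F b k x) := by
    intro k hk a b x
    have h2 : ∀ w : Multiplicative (ZMod 2), w = 1 ∨ w = Multiplicative.ofAdd 1 := by decide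
    rcases h2 a with ha | ha <;> rcases h2 b with hb | hb <;>
      simp [F, ha, hb, hk x, show (Multiplicative.ofAdd (1 : ZMod 2)) * Multiplicative.ofAdd 1 = 1 by decide,
        show (Multiplicative.ofAdd (1 : ZMod 2)) ≠ 1 by decide]
  letI : SMul M X := ⟨fun m x => F m.1 f (F m.2 g x)⟩
  have smul_def : ∀ (m : M) (x : X), m • x = F m.1 f (F m.2 g x) := fun _ _ => rfl
  have hswap : ∀ (a b : Multiplicative (ZMod 2)) (x : X), F a f (F b g x) = F b g (F a f x) := by
    intro a b x
    by_cases ha : a = 1 <;> by_cases hb : b = 1 <;> simp [F, ha, hb, hfg x]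
  letI : MulAction M X :=
    { one_smul := fun x => by simp [smul_def, F]
      mul_smul := fun m n x => by
        show F (m.1 * n.1) f (F (m.2 * n.2) g x) = F m.1 f (F m.2 g (F n.1 f (F n.2 g x)))
        rw [hFmul f hf, hFmul g hg, hswap n.1 m.2] }
  have hP : IsPGroup 2 M := IsPGroup.of_card (n := 2) (by
    simp [hM, Nat.card_eq_fintype_card])
  have hmod := hP.card_modEq_card_fixedPoints X
  have hoddfix : Nat.card (fixedPoints M X) % 2 = 1 := by
    have h1 : Nat.card X % 2 = 1 := Nat.odd_iff.mp hodd
    rw [Nat.ModEq] at hmod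
    omega
  have hpos : 0 < Nat.card (fixedPoints M X) := by omega
  have hne : Nonempty (fixedPoints M X) := (Nat.card_pos_iff.mp hpos).1
  obtain ⟨⟨x, hx⟩⟩ := hne
  refine ⟨x, ?_, ?_⟩
  · have := hx (⟨Multiplicative.ofAdd 1, 1⟩ : M)
    simpa [smul_def, F, show (Multiplicative.ofAdd (1 : ZMod 2)) ≠ 1 by decide] using this
  · have := hx (⟨1, Multiplicative.ofAdd 1⟩ : M)
    simpa [smul_def, F, show (Multiplicative.ofAdd (1 : ZMod 2)) ≠ 1 by decide] using this


/-- Restrict a self-inverse automorphism to an invariant subgroup. -/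
def restrInvol {H : Type*} [Group H] (φ : H ≃* H) (hφ : ∀ h, φ (φ h) = h)
    (A : Subgroup H) (hA : ∀ x ∈ A, φ x ∈ A) : A ≃* A where
  toFun x := ⟨φ x, hA x x.2⟩
  invFun x := ⟨φ x, hA x x.2⟩
  left_inv x := Subtype.ext (hφ x)
  right_inv x := Subtype.ext (hφ x)
  map_mul' x y := Subtype.ext (map_mul φ (x : H) (y : H))

@[simp] lemma restrInvol_apply {H : Type*} [Group H] (φ : H ≃* H) (hφ : ∀ h, φ (φ h) = h)
    (A : Subgroup H) (hA : ∀ x ∈ A, φ x ∈ A) (x : A) :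
    (restrInvol φ hφ A hA x : H) = φ x := rfl

lemma odd_of_dvd {m n : ℕ} (h : m ∣ n) (hn : Odd n) : Odd m := by
  obtain ⟨k, rfl⟩ := h
  exact (Nat.odd_mul.mp hn).1

/-- An involution of an odd group fixes a point in each invariant coset. -/
lemma coset_fixed {H : Type*} [Group H] [Finite H] (hodd : Odd (Nat.card H))
    (σ : H ≃* H) (hσ : ∀ h, σ (σ h) = h) (N : Subgroup H) (hN : ∀ n ∈ N, σ n ∈ N)
    (h : H) (hh : h⁻¹ * σ h ∈ N) : ∃ c, σ c = c ∧ h⁻¹ * c ∈ N := by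
  classical
  let X := {x : H // h⁻¹ * x ∈ N}
  have hcard : Nat.card X = Nat.card N := by
    refine Nat.card_congr ⟨fun x => ⟨h⁻¹ * x, x.2⟩, fun n => ⟨h * n, by simp⟩, ?_, ?_⟩
    · intro x; ext; simp
    · intro n; ext; simp
  have hXodd : Odd (Nat.card X) := by
    rw [hcard]; exact odd_of_dvd (Subgroup.card_subgroup_dvd_card N) hodd
  let f : X → X := fun x => ⟨σ x, by
    have : h⁻¹ * (σ x : H) = (h⁻¹ * σ h) * σ (h⁻¹ * x) := by
      rw [map_mul, map_inv]; group
    rw [this]; exact mul_mem hh (hN _ x.2)⟩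
  have hf : ∀ x, f (f x) = x := fun x => Subtype.ext (hσ x)
  obtain ⟨x, hx, -⟩ := exists_fixed_pair hXodd f f hf hf (fun _ => rfl)
  exact ⟨x, congrArg Subtype.val hx, x.2⟩

lemma abelian_case {H : Type*} [Group H] [Finite H] (hcomm' : ∀ a b : H, a * b = b * a)
    (hodd : Odd (Nat.card H)) (φ ψ : H ≃* H)
    (hφ : ∀ h, φ (φ h) = h) (hψ : ∀ h, ψ (ψ h) = h) (hcomm : ∀ h, φ (ψ h) = ψ (φ h)) :
    Subgroup.closure ({h | φ h = h} ∪ {h | ψ h = h} ∪ {h | φ (ψ h) = h}) = ⊤ := by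
  letI : CommGroup H := { (inferInstance : Group H) with mul_comm := hcomm' }
  have hχ : ∀ x, φ (ψ (φ (ψ x))) = x := fun x => by rw [← hcomm (ψ x), hφ, hψ]
  rw [Subgroup.eq_top_iff']
  intro h
  set K := Subgroup.closure ({h | φ h = h} ∪ {h | ψ h = h} ∪ {h | φ (ψ h) = h}) with hK
  have mem1 : h * φ h ∈ K := Subgroup.subset_closure (Or.inl (Or.inl (by
    show φ (h * φ h) = h * φ h
    rw [map_mul, hφ, mul_comm])))
  have mem2 : h * ψ h ∈ K := Subgroup.subset_closure (Or.inl (Or.inr (by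
    show ψ (h * ψ h) = h * ψ h
    rw [map_mul, hψ, mul_comm])))
  have mem3 : h * φ (ψ h) ∈ K := Subgroup.subset_closure (Or.inr (by
    show φ (ψ (h * φ (ψ h))) = h * φ (ψ h)
    rw [map_mul, map_mul, hχ, mul_comm]))
  have mem4 : h * φ h * ψ h * φ (ψ h) ∈ K := Subgroup.subset_closure (Or.inl (Or.inl (by
    show φ (h * φ h * ψ h * φ (ψ h)) = h * φ h * ψ h * φ (ψ h)
    simp only [map_mul, hφ]
    rw [hcomm h]
    ac_rfl)))
  have hsq : h ^ 2 ∈ K := by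
    have key : h ^ 2 * (h * φ h * ψ h * φ (ψ h)) = (h * φ h) * (h * ψ h) * (h * φ (ψ h)) := by
      rw [pow_two]; ac_rfl
    have key2 : h ^ 2 = (h * φ h) * (h * ψ h) * (h * φ (ψ h)) * (h * φ h * ψ h * φ (ψ h))⁻¹ :=
      eq_mul_inv_of_mul_eq key
    rw [key2]
    exact mul_mem (mul_mem (mul_mem mem1 mem2) mem3) (inv_mem mem4)
  have hdvd : orderOf h ∣ Nat.card H := orderOf_dvd_natCard h
  obtain ⟨m, hm⟩ := odd_of_dvd hdvd hodd
  have : (h ^ 2) ^ (m + 1) = h := by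
    rw [← pow_mul]
    have h2 : 2 * (m + 1) = orderOf h + 1 := by omega
    rw [h2, pow_succ, pow_orderOf_eq_one, one_mul]
  rw [← this]
  exact pow_mem hsq _

/-- If the restricted closure statement holds on an invariant subgroup `A`, then
`A` is contained in the big closure. -/
lemma le_closure_of_closure {H : Type*} [Group H] (φ ψ : H ≃* H)
    (hφ : ∀ h, φ (φ h) = h) (hψ : ∀ h, ψ (ψ h) = h)
    (A : Subgroup H) (hAφ : ∀ x ∈ A, φ x ∈ A) (hAψ : ∀ x ∈ A, ψ x ∈ A)
    (hcl : Subgroup.closure ({x : A | restrInvol φ hφ A hAφ x = x}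
        ∪ {x : A | restrInvol ψ hψ A hAψ x = x}
        ∪ {x : A | restrInvol φ hφ A hAφ (restrInvol ψ hψ A hAψ x) = x}) = ⊤) :
    A ≤ Subgroup.closure ({h : H | φ h = h} ∪ {h | ψ h = h} ∪ {h | φ (ψ h) = h}) := by
  intro x hx
  have hxA : (⟨x, hx⟩ : A) ∈ Subgroup.closure ({x : A | restrInvol φ hφ A hAφ x = x}
        ∪ {x : A | restrInvol ψ hψ A hAψ x = x}
        ∪ {x : A | restrInvol φ hφ A hAφ (restrInvol ψ hψ A hAψ x) = x}) := by
    rw [hcl]; trivial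
  refine Subgroup.closure_induction
    (p := fun (y : A) (_ : y ∈ _) =>
      (y : H) ∈ Subgroup.closure ({h : H | φ h = h} ∪ {h | ψ h = h} ∪ {h | φ (ψ h) = h}))
    ?_ ?_ ?_ ?_ hxA
  · rintro y (⟨hy | hy⟩ | hy) <;> refine Subgroup.subset_closure ?_
    · exact Or.inl (Or.inl (congrArg Subtype.val hy))
    · exact Or.inl (Or.inr (congrArg Subtype.val hy))
    · exact Or.inr (congrArg Subtype.val hy)
  · simpa using Subgroup.one_mem _
  · intro y z _ _ hy hz; simpa using Subgroup.mul_mem _ hy hz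
  · intro y _ hy; simpa using Subgroup.inv_mem _ hy

theorem solv_case : ∀ (n : ℕ) {H : Type u} [Group H] [Finite H] [Group.IsSolvable H],
    Nat.card H = n → ∀ (φ ψ : H ≃* H), (∀ h, φ (φ h) = h) → (∀ h, ψ (ψ h) = h) →
    (∀ h, φ (ψ h) = ψ (φ h)) → Odd (Nat.card H) →
    Subgroup.closure ({h | φ h = h} ∪ {h | ψ h = h} ∪ {h | φ (ψ h) = h}) = ⊤ := by
  intro n
  induction n using Nat.strong_induction_on with
  | _ n IH =>
    intro H _ _ _ hn φ ψ hφ hψ hcomm hodd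
    rcases eq_or_ne (Nat.card H) 1 with h1 | h1
    · have : Subsingleton H := Nat.card_eq_one_iff_unique.mp h1 |>.1
      rw [Subgroup.eq_top_iff']
      intro x
      rw [Subsingleton.elim x 1]
      exact Subgroup.one_mem _
    -- the commutator subgroup
    set N := commutator H with hN
    have hNchar : ∀ (e : H ≃* H) , ∀ x, x ∈ N ↔ e x ∈ N := by
      intro e x
      have hco := Subgroup.characteristic_iff_comap_eq.mp (inferInstance : N.Characteristic) e
      exact ⟨fun hx => Subgroup.mem_comap.mp (by rw [hco]; exact hx),
        fun hx => by rw [← hco]; exact Subgroup.mem_comap.mpr hx⟩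
    have hNφ : ∀ x ∈ N, φ x ∈ N := fun x hx => (hNchar φ x).mp hx
    have hNψ : ∀ x ∈ N, ψ x ∈ N := fun x hx => (hNchar ψ x).mp hx
    have hNne : N ≠ ⊤ := by
      intro htop
      have hds : ∀ k, derivedSeries H k = ⊤ := by
        intro k; induction k with
        | zero => rfl
        | succ k ih => rw [derivedSeries_succ, ih]; exact htop
      obtain ⟨k, hk⟩ := (inferInstance : Group.IsSolvable H).solvable
      rw [hds k] at hk
      have hall : ∀ x : H, x = 1 := fun x => Subgroup.mem_bot.mp (hk ▸ Subgroup.mem_top x)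
      haveI : Subsingleton H := ⟨fun a b => by rw [hall a, hall b]⟩
      exact h1 (Nat.card_eq_one_iff_unique.mpr ⟨inferInstance, ⟨1⟩⟩)
    -- N is proper, so smaller
    have hcardN : Nat.card N < n := by
      have hmul := Subgroup.card_mul_index N
      have hidx1 : N.index ≠ 1 := fun hidx => hNne (Subgroup.index_eq_one.mp hidx)
      have hpos : 0 < Nat.card N := Nat.card_pos
      have hposH : 0 < Nat.card H := Nat.card_pos
      have hidx0 : N.index ≠ 0 := by intro h0; rw [h0, mul_zero] at hmul; omega
      have h2 : 2 ≤ N.index := by omega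
      calc Nat.card N = Nat.card N * 1 := (mul_one _).symm
        _ < Nat.card N * N.index :=
            lt_of_lt_of_le (by omega) (Nat.mul_le_mul_left _ h2)
        _ = Nat.card H := hmul
        _ = n := hn
    -- restrict to N
    set φN := restrInvol φ hφ N hNφ with hφN
    set ψN := restrInvol ψ hψ N hNψ with hψN
    have hclN := IH (Nat.card N) (by omega) rfl φN ψN
      (fun x => Subtype.ext (hφ x)) (fun x => Subtype.ext (hψ x))
      (fun x => Subtype.ext (hcomm x))
      (odd_of_dvd (Subgroup.card_subgroup_dvd_card N) hodd)
    set K := Subgroup.closure ({h : H | φ h = h} ∪ {h | ψ h = h} ∪ {h | φ (ψ h) = h}) with hK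
    have hNleK : N ≤ K := le_closure_of_closure φ ψ hφ hψ N hNφ hNψ hclN
    -- quotient
    have hmapφ : N.map φ.toMonoidHom = N := by
      ext x
      constructor
      · rintro ⟨y, hy, rfl⟩; exact hNφ y hy
      · intro hx; exact ⟨φ x, hNφ x hx, hφ x⟩
    have hmapψ : N.map ψ.toMonoidHom = N := by
      ext x
      constructor
      · rintro ⟨y, hy, rfl⟩; exact hNψ y hy
      · intro hx; exact ⟨ψ x, hNψ x hx, hψ x⟩
    set φq := QuotientGroup.congr N N φ hmapφ with hφqdef
    set ψq := QuotientGroup.congr N N ψ hmapψ with hψqdef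
    have hφq_mk : ∀ h : H, φq ↑h = ↑(φ h) := fun _ => rfl
    have hψq_mk : ∀ h : H, ψq ↑h = ↑(ψ h) := fun _ => rfl
    have hφq : ∀ x : H ⧸ N, φq (φq x) = x := fun x =>
      QuotientGroup.induction_on x fun h => by rw [hφq_mk, hφq_mk, hφ]
    have hψq : ∀ x : H ⧸ N, ψq (ψq x) = x := fun x =>
      QuotientGroup.induction_on x fun h => by rw [hψq_mk, hψq_mk, hψ]
    have hcommq : ∀ x : H ⧸ N, φq (ψq x) = ψq (φq x) := fun x =>
      QuotientGroup.induction_on x fun h => by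
        rw [hψq_mk, hφq_mk, hφq_mk, hψq_mk, hcomm]
    have hqcomm : ∀ a b : H ⧸ N, a * b = b * a := by
      intro a b
      refine QuotientGroup.induction_on a fun g => QuotientGroup.induction_on b fun h => ?_
      show ((g * h : H) : H ⧸ N) = ((h * g : H) : H ⧸ N)
      rw [QuotientGroup.eq]
      have : (g * h)⁻¹ * (h * g) = ⁅h⁻¹, g⁻¹⁆ := by
        simp only [commutatorElement_def, inv_inv, mul_inv_rev]; group
      rw [this]
      exact Subgroup.commutator_mem_commutator (Subgroup.mem_top _) (Subgroup.mem_top _)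
    have hoddq : Odd (Nat.card (H ⧸ N)) := by
      refine odd_of_dvd ⟨Nat.card N, ?_⟩ hodd
      rw [Subgroup.card_eq_card_quotient_mul_card_subgroup N]
    have habq := abelian_case hqcomm hoddq φq ψq hφq hψq hcommq
    -- pull back
    have hsub : ({x : H ⧸ N | φq x = x} ∪ {x | ψq x = x} ∪ {x | φq (ψq x) = x})
        ⊆ (K.map (QuotientGroup.mk' N) : Set (H ⧸ N)) := by
      rintro x (⟨hx | hx⟩ | hx) <;>
        obtain ⟨h, rfl⟩ := QuotientGroup.mk_surjective x
      · replace hx : φq ↑h = ↑h := hx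
        rw [hφq_mk] at hx
        have hmem : h⁻¹ * φ h ∈ N := (QuotientGroup.eq).mp hx.symm
        obtain ⟨c, hc1, hc2⟩ := coset_fixed hodd φ hφ N hNφ h hmem
        refine ⟨c, Subgroup.subset_closure (Or.inl (Or.inl hc1)), ?_⟩
        exact ((QuotientGroup.eq).mpr hc2).symm
      · replace hx : ψq ↑h = ↑h := hx
        rw [hψq_mk] at hx
        have hmem : h⁻¹ * ψ h ∈ N := (QuotientGroup.eq).mp hx.symm
        obtain ⟨c, hc1, hc2⟩ := coset_fixed hodd ψ hψ N hNψ h hmem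
        refine ⟨c, Subgroup.subset_closure (Or.inl (Or.inr hc1)), ?_⟩
        exact ((QuotientGroup.eq).mpr hc2).symm
      · replace hx : φq (ψq ↑h) = ↑h := hx
        rw [hψq_mk, hφq_mk] at hx
        set χ : H ≃* H := ψ.trans φ with hχdef
        have hχap : ∀ h : H, χ h = φ (ψ h) := fun _ => rfl
        have hχ : ∀ h, χ (χ h) = h := by
          intro h
          rw [hχap, hχap, ← hcomm (ψ h), hφ, hψ]
        have hNχ : ∀ x ∈ N, χ x ∈ N := fun x hx => hNφ _ (hNψ x hx)
        have hmem : h⁻¹ * χ h ∈ N := (QuotientGroup.eq).mp hx.symm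
        obtain ⟨c, hc1, hc2⟩ := coset_fixed hodd χ hχ N hNχ h hmem
        refine ⟨c, Subgroup.subset_closure (Or.inr (show φ (ψ c) = c from hc1)), ?_⟩
        exact ((QuotientGroup.eq).mpr hc2).symm
    have hmapK : K.map (QuotientGroup.mk' N) = ⊤ := by
      rw [eq_top_iff, ← habq]
      exact Subgroup.closure_le _ |>.mpr hsub
    rw [Subgroup.eq_top_iff']
    intro h
    have : ((h : H ⧸ N)) ∈ K.map (QuotientGroup.mk' N) := by rw [hmapK]; trivial
    obtain ⟨k, hk, hkh⟩ := this
    have : k⁻¹ * h ∈ N := by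
      rw [← QuotientGroup.eq]
      exact hkh
    have := hNleK this
    have : k * (k⁻¹ * h) ∈ K := mul_mem hk this
    simpa using this

/-- If a Klein four-group `V = ⟨φ, ψ⟩` acts on a finite group `H`
of odd order by automorphisms, then `H` is generated by the fixed points of the
nontrivial elements of `V`. -/
theorem stmt11 {H : Type*} [Group H] [Finite H] (hodd : Odd (Nat.card H))
    (φ ψ : H ≃* H)
    (hφ : ∀ h, φ (φ h) = h) (hψ : ∀ h, ψ (ψ h) = h)
    (hcomm : ∀ h, φ (ψ h) = ψ (φ h)) :
    Subgroup.closure ({h | φ h = h} ∪ {h | ψ h = h} ∪ {h | φ (ψ h) = h}) = ⊤ := by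
  set K := Subgroup.closure ({h : H | φ h = h} ∪ {h | ψ h = h} ∪ {h | φ (ψ h) = h}) with hK
  have key : ∀ p : ℕ, p.Prime → p ^ (Nat.card H).factorization p ∣ Nat.card K := by
    intro p hp
    haveI : Fact p.Prime := ⟨hp⟩
    have hoddS : Odd (Nat.card (Sylow p H)) := by
      obtain ⟨P⟩ := (inferInstance : Nonempty (Sylow p H))
      exact odd_of_dvd ((Sylow.card_dvd_index P).trans (Subgroup.index_dvd_card _)) hodd
    have hφ2 : (φ : MulAut H) * φ = 1 := by
      ext x; exact hφ x
    have hψ2 : (ψ : MulAut H) * ψ = 1 := by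
      ext x; exact hψ x
    have hc2 : (φ : MulAut H) * ψ = (ψ : MulAut H) * φ := by
      ext x; exact hcomm x
    obtain ⟨Q, hQφ, hQψ⟩ := exists_fixed_pair hoddS
      (fun P : Sylow p H => (φ : MulAut H) • P) (fun P => (ψ : MulAut H) • P)
      (fun P => by show (φ : MulAut H) • (φ : MulAut H) • P = P; rw [← mul_smul, hφ2, one_smul])
      (fun P => by show (ψ : MulAut H) • (ψ : MulAut H) • P = P; rw [← mul_smul, hψ2, one_smul])
      (fun P => by
        show (φ : MulAut H) • (ψ : MulAut H) • P = (ψ : MulAut H) • (φ : MulAut H) • P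
        rw [← mul_smul, ← mul_smul, hc2])
    have hsubφ : ∀ x ∈ (Q : Subgroup H), φ x ∈ (Q : Subgroup H) := by
      intro x hx
      have h2 : ((φ : MulAut H) • (Q : Subgroup H)) = (Q : Subgroup H) := by
        rw [← Sylow.pointwise_smul_def, hQφ]
      rw [← h2]
      exact Subgroup.smul_mem_pointwise_smul x _ _ hx
    have hsubψ : ∀ x ∈ (Q : Subgroup H), ψ x ∈ (Q : Subgroup H) := by
      intro x hx
      have h2 : ((ψ : MulAut H) • (Q : Subgroup H)) = (Q : Subgroup H) := by
        rw [← Sylow.pointwise_smul_def, hQψ]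
      rw [← h2]
      exact Subgroup.smul_mem_pointwise_smul x _ _ hx
    haveI : Group.IsNilpotent (Q : Subgroup H) := Q.isPGroup'.isNilpotent
    have hQodd : Odd (Nat.card (Q : Subgroup H)) :=
      odd_of_dvd (Subgroup.card_subgroup_dvd_card _) hodd
    have hclQ := solv_case (Nat.card (Q : Subgroup H)) rfl
      (restrInvol φ hφ (Q : Subgroup H) hsubφ) (restrInvol ψ hψ (Q : Subgroup H) hsubψ)
      (fun x => Subtype.ext (hφ x)) (fun x => Subtype.ext (hψ x))
      (fun x => Subtype.ext (hcomm x)) hQodd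
    have hQleK : (Q : Subgroup H) ≤ K :=
      le_closure_of_closure φ ψ hφ hψ (Q : Subgroup H) hsubφ hsubψ hclQ
    have hcardQ : Nat.card (Q : Subgroup H) = p ^ (Nat.card H).factorization p :=
      Sylow.card_eq_multiplicity Q
    rw [← hcardQ]
    exact Subgroup.card_dvd_of_le hQleK
  have h0K : Nat.card K ≠ 0 := Nat.card_pos.ne'
  have h0H : Nat.card H ≠ 0 := Nat.card_pos.ne'
  have hdvd : Nat.card H ∣ Nat.card K := by
    rw [← Nat.factorization_le_iff_dvd h0H h0K]
    refine Finsupp.le_def.mpr fun p => ?_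
    by_cases hp : p.Prime
    · exact (Nat.Prime.pow_dvd_iff_le_factorization hp h0K).mp (key p hp)
    · simp [Nat.factorization_eq_zero_of_not_prime _ hp]
  have hcard : Nat.card K = Nat.card H :=
    Nat.dvd_antisymm (Subgroup.card_subgroup_dvd_card K) hdvd
  exact Subgroup.eq_top_of_card_eq K hcard
end
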